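/- Let M ⊆ {1,…,n} be the set of connecting coordinates and suppose M is nonempty. Then there exist differentiable functions σ_a : ℝ → ℝ for each a ∈ M, and nowhere-vanishing functions Φ̂_a : ℝ → ℝ for each a ∈ M, such that for every a ∈ M and all (x₁,…,xₙ) ∈ ℝⁿ: ∏_{j≠a} (σ_{aj}(x_a) + σ_{ja}(x_j)) = Φ̂_a(x_a) · ∏_{b∈M, b≠a} (σ_a(x_a) − σ_b(x_b)). -/

import Mathlib

open scoped Classical

lemma aux_deriv_zero_of_const (f g : ℝ → ℝ) (h : ∀ x, HasDerivAt f (g x) x)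
    (hc : ∀ x, f x = f 0) : ∀ x, g x = 0 := by
  intro x
  have h1 : HasDerivAt f 0 x := by
    have hf : f = fun _ => f 0 := funext hc
    rw [hf]
    exact hasDerivAt_const x (f 0)
  exact (h x).unique h1

lemma aux_const_of_deriv_zero (f g : ℝ → ℝ) (h : ∀ x, HasDerivAt f (g x) x)
    (hz : ∀ x, g x = 0) : ∀ x, f x = f 0 := by
  intro x
  have hd : ∀ y, deriv f y = 0 := fun y => by rw [(h y).deriv, hz]
  exact is_const_of_deriv_eq_zero (fun y => (h y).differentiableAt) hd x 0

/-- the s-derivative of the functional equation -/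
lemma aux_DS (n : ℕ) (σ σ' : Fin n → Fin n → ℝ → ℝ)
    (hderiv : ∀ i j : Fin n, i ≠ j → ∀ x : ℝ, HasDerivAt (σ i j) (σ' i j x) x)
    (heq : ∀ i j k : Fin n, i ≠ j → j ≠ k → i ≠ k → ∀ s t u : ℝ,
      σ' j i t * σ' k i u * (σ j k t + σ k j u)
        - σ' j i t * σ' k j u * (σ k i u + σ i k s)
        - σ' k i u * σ' j k t * (σ i j s + σ j i t) = 0)
    (i j k : Fin n) (hij : i ≠ j) (hjk : j ≠ k) (hik : i ≠ k) :
    ∀ s t u : ℝ,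
      σ' j i t * σ' k j u * σ' i k s + σ' k i u * σ' j k t * σ' i j s = 0 := by
  intro s t u
  set f : ℝ → ℝ := fun v => σ' j i t * σ' k j u * σ i k v + σ' k i u * σ' j k t * σ i j v with hf
  have hfd : ∀ v, HasDerivAt f (σ' j i t * σ' k j u * σ' i k v + σ' k i u * σ' j k t * σ' i j v) v := by
    intro v
    exact (((hderiv i k hik v).const_mul _).add ((hderiv i j hij v).const_mul _))
  have hfc : ∀ v, f v = f 0 := by
    intro v
    have h1 := heq i j k hij hjk hik v t u
    have h2 := heq i j k hij hjk hik 0 t u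
    simp only [hf]
    linarith
  exact aux_deriv_zero_of_const f _ hfd hfc s

/-- proportionality of derivatives with a nonzero constant -/
lemma aux_prop (n : ℕ) (σ σ' : Fin n → Fin n → ℝ → ℝ)
    (hderiv : ∀ i j : Fin n, i ≠ j → ∀ x : ℝ, HasDerivAt (σ i j) (σ' i j x) x)
    (heq : ∀ i j k : Fin n, i ≠ j → j ≠ k → i ≠ k → ∀ s t u : ℝ,
      σ' j i t * σ' k i u * (σ j k t + σ k j u)
        - σ' j i t * σ' k j u * (σ k i u + σ i k s)
        - σ' k i u * σ' j k t * (σ i j s + σ j i t) = 0)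
    (a b c : Fin n) (hab : a ≠ b) (hbc : b ≠ c) (hac : a ≠ c)
    (hba : ∃ x, σ' b a x ≠ 0) (hcb : ∃ x, σ' c b x ≠ 0) (hacn : ∃ x, σ' a c x ≠ 0) :
    ∃ μ : ℝ, μ ≠ 0 ∧ (∀ s, σ' a c s = μ * σ' a b s) ∧
      (∀ s, σ a c s = μ * σ a b s + (σ a c 0 - μ * σ a b 0)) := by
  obtain ⟨t₀, ht₀⟩ := hba
  obtain ⟨u₀, hu₀⟩ := hcb
  have hDS := aux_DS n σ σ' hderiv heq a b c hab hbc hac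
  refine ⟨-(σ' c a u₀ * σ' b c t₀) / (σ' b a t₀ * σ' c b u₀), ?_, ?_, ?_⟩
  · -- μ ≠ 0 since σ' a c is nonzero somewhere
    obtain ⟨s₀, hs₀⟩ := hacn
    have h := hDS s₀ t₀ u₀
    intro hμ
    rw [div_eq_zero_iff] at hμ
    rcases hμ with hμ | hμ
    · have : σ' c a u₀ * σ' b c t₀ = 0 := by linarith [neg_eq_zero.mp hμ]
      have h2 : σ' b a t₀ * σ' c b u₀ * σ' a c s₀ = 0 := by
        linear_combination h - σ' a b s₀ * this
      exact hs₀ (by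
        have := mul_ne_zero ht₀ hu₀
        exact (mul_eq_zero.mp h2).resolve_left this)
    · exact (mul_ne_zero ht₀ hu₀) hμ
  · intro s
    have h := hDS s t₀ u₀
    field_simp
    nlinarith [h]
  · intro s
    set μ := -(σ' c a u₀ * σ' b c t₀) / (σ' b a t₀ * σ' c b u₀) with hμ
    have hprop : ∀ v, σ' a c v = μ * σ' a b v := by
      intro v
      have h := hDS v t₀ u₀
      simp only [hμ]
      field_simp
      nlinarith [h]
    have hconst := aux_const_of_deriv_zero (fun v => σ a c v - μ * σ a b v)
      (fun v => σ' a c v - μ * σ' a b v)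
      (fun v => ((hderiv a c hac v).sub ((hderiv a b hab v).const_mul μ)))
      (fun v => by show σ' a c v - μ * σ' a b v = 0; rw [hprop v]; ring) s
    linarith

/-- If the set `M` of connecting coordinates is nonempty, then
the metric coefficient of each connecting coordinate `a` factors in Eisenhart's
irreducible form: there are differentiable functions `τ a` and nowhere-vanishing
functions `Φ a` such that
`∏_{j ≠ a} (σ_{aj}(x_a) + σ_{ja}(x_j)) = Φ_a(x_a) ∏_{b ∈ M, b ≠ a} (τ_a(x_a) − τ_b(x_b))`. -/
theorem connecting_coordinates_metric_form (n : ℕ) (hn : 3 ≤ n)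
    (σ σ' : Fin n → Fin n → ℝ → ℝ)
    (hderiv : ∀ i j : Fin n, i ≠ j → ∀ x : ℝ, HasDerivAt (σ i j) (σ' i j x) x)
    (hne : ∀ i j : Fin n, i ≠ j → ∀ s t : ℝ, σ i j s + σ j i t ≠ 0)
    (heq : ∀ i j k : Fin n, i ≠ j → j ≠ k → i ≠ k → ∀ s t u : ℝ,
      σ' j i t * σ' k i u * (σ j k t + σ k j u)
        - σ' j i t * σ' k j u * (σ k i u + σ i k s)
        - σ' k i u * σ' j k t * (σ i j s + σ j i t) = 0)
    (M : Finset (Fin n))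
    (hM : M = Finset.univ.filter (fun i : Fin n =>
      ∀ j : Fin n, j ≠ i → ∃ x, σ' i j x ≠ 0))
    (hMne : M.Nonempty) :
    ∃ τ Φ : Fin n → ℝ → ℝ,
      (∀ a ∈ M, Differentiable ℝ (τ a)) ∧
      (∀ a ∈ M, ∀ x : ℝ, Φ a x ≠ 0) ∧
      ∀ a ∈ M, ∀ x : Fin n → ℝ,
        (∏ j ∈ Finset.univ.erase a, (σ a j (x a) + σ j a (x j)))
          = Φ a (x a) * ∏ b ∈ M.erase a, (τ a (x a) - τ b (x b)) := by
  classical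
  -- connecting coordinates have all derivatives somewhere nonzero
  have hconn : ∀ a ∈ M, ∀ j : Fin n, j ≠ a → ∃ x, σ' a j x ≠ 0 := by
    intro a ha j hj
    rw [hM, Finset.mem_filter] at ha
    exact ha.2 j hj
  have hnotM : ∀ j : Fin n, j ∉ M → ∃ k, k ≠ j ∧ ∀ x, σ' j k x = 0 := by
    intro j hj
    rw [hM, Finset.mem_filter] at hj
    push_neg at hj
    obtain ⟨k, hk1, hk2⟩ := hj (Finset.mem_univ j)
    exact ⟨k, hk1, hk2⟩
  -- Claim A : for a connecting and j not connecting, σ j a is constant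
  have claimA : ∀ a ∈ M, ∀ j : Fin n, j ∉ M → j ≠ a → ∀ t, σ' j a t = 0 := by
    intro a ha j hjM hja t
    by_contra ht₀
    obtain ⟨k, hkj, hk0⟩ := hnotM j hjM
    by_cases hka : k = a
    · exact ht₀ (by rw [← hka]; exact hk0 t)
    · obtain ⟨t₁, ht₁⟩ := hconn a ha k hka
      have h := heq k a j hka (Ne.symm hja) hkj 0 t₁ t
      rw [hk0 t] at h
      have h3 : σ' a k t₁ * σ' j a t * (σ j k t + σ k j 0) = 0 := by
        linear_combination -h
      have h4 : σ j k t + σ k j 0 = 0 :=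
        (mul_eq_zero.mp h3).resolve_left (mul_ne_zero ht₁ ht₀)
      exact hne j k (fun h => hkj h.symm) t 0 h4
  have claimA' : ∀ a ∈ M, ∀ j : Fin n, j ∉ M → j ≠ a → ∀ t, σ j a t = σ j a 0 :=
    fun a ha j hjM hja =>
      aux_const_of_deriv_zero (σ j a) (σ' j a) (hderiv j a hja) (claimA a ha j hjM hja)
  -- Main construction: τ and the pairwise constants
  obtain ⟨τ, hτdiff, hpair⟩ : ∃ τ : Fin n → ℝ → ℝ,
      (∀ a ∈ M, Differentiable ℝ (τ a)) ∧
      ∀ a b : Fin n, a ∈ M → b ∈ M → a ≠ b →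
        ∃ γ : ℝ, γ ≠ 0 ∧ ∀ s t : ℝ, σ a b s + σ b a t = γ * (τ a s - τ b t) := by
    obtain ⟨a₀, ha₀⟩ := hMne
    by_cases hsing : ∀ b ∈ M, b = a₀
    · exact ⟨fun _ _ => 0, fun a _ => differentiable_const 0, fun a b ha hb hab =>
        absurd ((hsing a ha).trans (hsing b hb).symm) hab⟩
    · push_neg at hsing
      obtain ⟨b₀, hb₀M, hb₀⟩ := hsing
      -- lam, mu : σ a₀ b is an affine function of σ a₀ b₀
      have hlm : ∀ b : Fin n, ∃ lmv : ℝ × ℝ, b ∈ M → b ≠ a₀ →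
          lmv.1 ≠ 0 ∧ (∀ s, σ' a₀ b s = lmv.1 * σ' a₀ b₀ s) ∧
          (∀ s, σ a₀ b s = lmv.1 * σ a₀ b₀ s + lmv.2) := by
        intro b
        by_cases hbM : b ∈ M ∧ b ≠ a₀
        · by_cases hbb : b = b₀
          · refine ⟨(1, 0), fun _ _ => ⟨one_ne_zero, ?_, ?_⟩⟩ <;> subst hbb <;>
              intro s <;> ring
          · obtain ⟨μ, hμ0, hμd, hμa⟩ := aux_prop n σ σ' hderiv heq a₀ b₀ b
              (Ne.symm hb₀) (Ne.symm hbb) (Ne.symm hbM.2)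
              (hconn b₀ hb₀M a₀ (Ne.symm hb₀)) (hconn b hbM.1 b₀ (Ne.symm hbb))
              (hconn a₀ ha₀ b hbM.2)
            exact ⟨(μ, σ a₀ b 0 - μ * σ a₀ b₀ 0), fun _ _ => ⟨hμ0, hμd, hμa⟩⟩
        · exact ⟨(1, 0), fun h1 h2 => absurd ⟨h1, h2⟩ hbM⟩
      choose lmv hlmv using hlm
      set lam : Fin n → ℝ := fun b => (lmv b).1 with hlamdef
      set mu : Fin n → ℝ := fun b => (lmv b).2 with hmudef
      set T : ℝ → ℝ := σ a₀ b₀ with hT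
      set τ : Fin n → ℝ → ℝ :=
        fun b s => if b = a₀ then T s else (-(σ b a₀ s) - mu b) / lam b with hτ
      have hτa₀ : ∀ s, τ a₀ s = T s := by intro s; simp [hτ]
      have hτne : ∀ b : Fin n, b ≠ a₀ → ∀ s, τ b s = (-(σ b a₀ s) - mu b) / lam b := by
        intro b hb s; simp [hτ, hb]
      refine ⟨τ, ?_, ?_⟩
      · -- differentiability
        intro a haM
        by_cases h : a = a₀
        · have hfn : τ a = fun s => T s := by funext s; simp [hτ, h]
          rw [hfn, hT]
          exact fun x => (hderiv a₀ b₀ (Ne.symm hb₀) x).differentiableAt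
        · have hfn : τ a = fun s => (-(σ a a₀ s) - mu a) / lam a := funext (hτne a h)
          rw [hfn]
          intro x
          exact ((((hderiv a a₀ h x).neg).sub_const (mu a)).div_const (lam a)).differentiableAt
      · -- pairwise relation
        intro a b haM hbM hab
        by_cases ha' : a = a₀
        · subst ha'
          have hb' : b ≠ a := Ne.symm hab
          obtain ⟨hlb0, hlbd, hlba⟩ := hlmv b hbM hb'
          refine ⟨lam b, hlb0, ?_⟩
          intro s t
          have hσb : σ b a t = -(lam b * τ b t) - mu b := by
            rw [hτne b hb' t]
            rw [mul_div_assoc', mul_div_cancel_left₀ _ (show lam b ≠ 0 from hlb0)]; ring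
          rw [hτa₀ s, hσb]
          linear_combination hlba s
        · by_cases hb' : b = a₀
          · subst hb'
            obtain ⟨hla0, hlad, hlaa⟩ := hlmv a haM hab
            refine ⟨-(lam a), neg_ne_zero.mpr hla0, ?_⟩
            intro s t
            have hσa : σ a b s = -(lam a * τ a s) - mu a := by
              rw [hτne a hab s]
              rw [mul_div_assoc', mul_div_cancel_left₀ _ (show lam a ≠ 0 from hla0)]; ring
            rw [hτa₀ t, hσa]
            linear_combination hlaa t
          · -- the main case : a, b, a₀ pairwise distinct, all in M
            obtain ⟨hla0, hlad, hlaa⟩ := hlmv a haM ha'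
            obtain ⟨hlb0, hlbd, hlba⟩ := hlmv b hbM hb'
            obtain ⟨A, hA0, hAd, hAa⟩ := aux_prop n σ σ' hderiv heq a a₀ b
              ha' (Ne.symm hb') hab
              (hconn a₀ ha₀ a ha') (hconn b hbM a₀ (Ne.symm hb')) (hconn a haM b (Ne.symm hab))
            obtain ⟨A', hA'0, hA'd, hA'a⟩ := aux_prop n σ σ' hderiv heq b a₀ a
              hb' (Ne.symm ha') (Ne.symm hab)
              (hconn a₀ ha₀ b hb') (hconn a haM a₀ (Ne.symm ha')) (hconn b hbM a hab)
            have hG : ∀ s t u : ℝ, σ' a a₀ t ≠ 0 → σ' b a₀ u ≠ 0 →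
                σ a b t + σ b a u - A' * (σ b a₀ u + σ a₀ b s)
                  - A * (σ a₀ a s + σ a a₀ t) = 0 := by
              intro s t u ht hu
              have h := heq a₀ a b (Ne.symm ha') hab (Ne.symm hb') s t u
              rw [hA'd u, hAd t] at h
              have h2 : σ' a a₀ t * σ' b a₀ u *
                  (σ a b t + σ b a u - A' * (σ b a₀ u + σ a₀ b s)
                    - A * (σ a₀ a s + σ a a₀ t)) = 0 := by
                linear_combination h
              exact (mul_eq_zero.mp h2).resolve_left (mul_ne_zero ht hu)
            obtain ⟨t₁, ht₁⟩ := hconn a haM a₀ (Ne.symm ha')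
            obtain ⟨u₁, hu₁⟩ := hconn b hbM a₀ (Ne.symm hb')
            obtain ⟨s₂, hs₂⟩ : ∃ s, T s ≠ T 0 := by
              by_contra hcon
              push_neg at hcon
              obtain ⟨x₀, hx₀⟩ := hconn a₀ ha₀ b₀ hb₀
              exact hx₀ (aux_deriv_zero_of_const T (σ' a₀ b₀)
                (hderiv a₀ b₀ (Ne.symm hb₀)) hcon x₀)
            have e1 := hG s₂ t₁ u₁ ht₁ hu₁
            have e2 := hG 0 t₁ u₁ ht₁ hu₁
            have h5 : A' * lam b + A * lam a = 0 := by
              have key : (A' * lam b + A * lam a) * (T s₂ - T 0) = 0 := by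
                linear_combination e2 - e1 - A' * hlba s₂ + A' * hlba 0
                  - A * hlaa s₂ + A * hlaa 0
              exact (mul_eq_zero.mp key).resolve_right (sub_ne_zero.mpr hs₂)
            have h6 : (σ a b 0 - A * σ a a₀ 0) + (σ b a 0 - A' * σ b a₀ 0)
                = A' * mu b + A * mu a := by
              linear_combination e2 - hAa t₁ - hA'a u₁ + A' * hlba 0
                + A * hlaa 0 + T 0 * h5
            refine ⟨-(A * lam a), neg_ne_zero.mpr (mul_ne_zero hA0 hla0), ?_⟩
            intro s t
            have hσa : σ a a₀ s = -(lam a * τ a s) - mu a := by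
              rw [hτne a ha' s]; rw [mul_div_assoc', mul_div_cancel_left₀ _ (show lam a ≠ 0 from hla0)]; ring
            have hσb : σ b a₀ t = -(lam b * τ b t) - mu b := by
              rw [hτne b hb' t]; rw [mul_div_assoc', mul_div_cancel_left₀ _ (show lam b ≠ 0 from hlb0)]; ring
            rw [hAa s, hA'a t, hσa, hσb]
            linear_combination h6 - τ b t * h5
  -- choose the pairwise constants as a function
  have hpair' : ∀ a b : Fin n, ∃ γ : ℝ, a ∈ M → b ∈ M → a ≠ b →
      γ ≠ 0 ∧ ∀ s t : ℝ, σ a b s + σ b a t = γ * (τ a s - τ b t) := by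
    intro a b
    by_cases h : a ∈ M ∧ b ∈ M ∧ a ≠ b
    · obtain ⟨γ, hγ0, hγ⟩ := hpair a b h.1 h.2.1 h.2.2
      exact ⟨γ, fun _ _ _ => ⟨hγ0, hγ⟩⟩
    · exact ⟨1, fun h1 h2 h3 => absurd ⟨h1, h2, h3⟩ h⟩
  choose c hc using hpair'
  refine ⟨τ, fun a x => (∏ j ∈ Finset.univ.erase a \ M.erase a, (σ a j x + σ j a 0)) *
      ∏ b ∈ M.erase a, c a b, hτdiff, ?_, ?_⟩
  · -- nonvanishing of Φ
    intro a ha x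
    apply mul_ne_zero
    · apply Finset.prod_ne_zero_iff.mpr
      intro j hj
      have hja : j ≠ a := Finset.ne_of_mem_erase (Finset.mem_sdiff.mp hj).1
      exact hne a j (Ne.symm hja) x 0
    · apply Finset.prod_ne_zero_iff.mpr
      intro b hb
      exact (hc a b ha (Finset.mem_of_mem_erase hb)
        (Ne.symm (Finset.ne_of_mem_erase hb))).1
  · -- the factorization
    intro a ha x
    have hsub : M.erase a ⊆ Finset.univ.erase a := by
      intro j hj
      exact Finset.mem_erase.mpr ⟨Finset.ne_of_mem_erase hj, Finset.mem_univ j⟩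
    rw [← Finset.prod_sdiff hsub]
    have h1 : ∏ j ∈ Finset.univ.erase a \ M.erase a, (σ a j (x a) + σ j a (x j))
        = ∏ j ∈ Finset.univ.erase a \ M.erase a, (σ a j (x a) + σ j a 0) := by
      apply Finset.prod_congr rfl
      intro j hj
      have hj' := Finset.mem_sdiff.mp hj
      have hja : j ≠ a := Finset.ne_of_mem_erase hj'.1
      have hjM : j ∉ M := fun hmem => hj'.2 (Finset.mem_erase.mpr ⟨hja, hmem⟩)
      rw [claimA' a ha j hjM hja (x j)]
    have h2 : ∏ b ∈ M.erase a, (σ a b (x a) + σ b a (x b))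
        = (∏ b ∈ M.erase a, c a b) * ∏ b ∈ M.erase a, (τ a (x a) - τ b (x b)) := by
      rw [← Finset.prod_mul_distrib]
      apply Finset.prod_congr rfl
      intro b hb
      exact (hc a b ha (Finset.mem_of_mem_erase hb)
        (Ne.symm (Finset.ne_of_mem_erase hb))).2 (x a) (x b)
    rw [h1, h2]
    ring
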